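/- Nontrivial mutual information for the fully-overlapping uniform case (eqs. 46b, 47): let p1, p2 > 0 with p1 + p2 = 1 and 0 < r < 1, and consider the joint probability mass function on {1,2} × {1,2} given by p(1,1) = p1·(1 − r), p(1,2) = p1·r, p(2,1) = 0, p(2,2) = p2 (this is the joint distribution of true class T and decision Y when, for uniform class-conditional densities with the support of class 2 fully contained in that of class 1, the overlap region is decided as class 2). Then 0 < I(T; Y) < H(T), i.e., the normalized mutual information NI = I(T;Y)/H(T) satisfies 0 < NI < 1; in particular such a decision yields strictly positive information, whereas the 'majority-taking-all' decision (all outputs equal to class 1) yields I(T;Y) = 0 and is therefore never chosen by a mutual-information classifier. -/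

import Mathlib

/-- Mutual information (in bits) of a 2×2 joint pmf with entries
`p(1,1) = a`, `p(1,2) = b`, `p(2,1) = c`, `p(2,2) = d`
(terms with zero joint mass contribute 0, as `x·log₂(...) = 0` when `x = 0`). -/
noncomputable def mi2 (a b c d : ℝ) : ℝ :=
  a * Real.logb 2 (a / ((a + b) * (a + c))) +
  b * Real.logb 2 (b / ((a + b) * (b + d))) +
  c * Real.logb 2 (c / ((c + d) * (a + c))) +
  d * Real.logb 2 (d / ((c + d) * (b + d)))

/-- Binary entropy (in bits), with the convention `0·log₂ 0 = 0`. -/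
noncomputable def binEnt (e : ℝ) : ℝ :=
  -(e * Real.logb 2 e) - (1 - e) * Real.logb 2 (1 - e)

lemma gibbs {p q : ℝ} (hp : 0 < p) (hq : 0 < q) : p - q ≤ p * Real.log (p / q) := by
  have h := Real.log_le_sub_one_of_pos (div_pos hq hp)
  have h2 : 1 - q / p ≤ Real.log (p / q) := by
    rw [Real.log_div hp.ne' hq.ne']
    rw [Real.log_div hq.ne' hp.ne'] at h
    linarith
  have h3 := mul_le_mul_of_nonneg_left h2 hp.le
  have h4 : p * (1 - q / p) = p - q := by field_simp
  linarith [h3, h4.symm.le]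


/-- Nontrivial mutual information for the fully-overlapping uniform case
(eqs. 46b, 47): the decision assigning the overlap region to class 2 yields
`0 < I(T;Y) < H(T)` (i.e. `0 < NI < 1`), whereas the majority-taking-all
decision yields `I(T;Y) = 0` and is therefore never chosen by a
mutual-information classifier. -/
theorem fully_overlapping_uniform_mutual_info
    (p1 p2 r : ℝ) (hp1 : 0 < p1) (hp2 : 0 < p2) (hp : p1 + p2 = 1)
    (hr0 : 0 < r) (hr1 : r < 1) :
    (0 < mi2 (p1 * (1 - r)) (p1 * r) 0 p2 ∧
      mi2 (p1 * (1 - r)) (p1 * r) 0 p2 < binEnt p1) ∧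
    mi2 p1 0 p2 0 = 0 := by
  have hlog2 : (0:ℝ) < Real.log 2 := Real.log_pos (by norm_num)
  set a := p1 * (1 - r) with ha_def
  set b := p1 * r with hb_def
  set s := p1 * r + p2 with hs_def
  clear_value a b s
  have ha : 0 < a := ha_def ▸ mul_pos hp1 (by linarith)
  have hb : 0 < b := hb_def ▸ mul_pos hp1 hr0
  have hs : 0 < s := hs_def ▸ by positivity
  have hab : a + b = p1 := by rw [ha_def, hb_def]; ring
  have hbs : b + p2 = s := by rw [hb_def, hs_def]
  have hp1lt : p1 < 1 := by linarith
  have hs1 : s < 1 := by rw [hs_def]; nlinarith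
  have hbslt : b < s := by rw [hs_def, hb_def]; linarith
  -- expression of mi2 * log 2
  have key : mi2 a b 0 p2 * Real.log 2 =
      a * Real.log (a / (p1 * a)) + b * Real.log (b / (p1 * s)) +
      p2 * Real.log (p2 / (p2 * s)) := by
    simp only [mi2, Real.logb, add_zero, zero_add, zero_mul, hab, hbs]
    field_simp
  -- lower bound
  have hlow : a * p2 ≤ mi2 a b 0 p2 * Real.log 2 := by
    rw [key]
    have g1 := gibbs ha (mul_pos hp1 ha)
    have g2 := gibbs hb (mul_pos hp1 hs)
    have g3 := gibbs hp2 (mul_pos hp2 hs)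
    have hsum : a - p1 * a + (b - p1 * s) + (p2 - p2 * s) = a * p2 := by
      have : s = 1 - a := by rw [hs_def, ha_def]; nlinarith
      rw [this]; nlinarith [hab, hp]
    linarith
  have hposI : 0 < mi2 a b 0 p2 := by
    have : 0 < a * p2 := mul_pos ha hp2
    nlinarith [hlow, hlog2]
  -- upper bound: (binEnt p1 - mi2) * log 2 = -b*log(b/s) - p2*log(p2/s) > 0
  have hbent : binEnt p1 * Real.log 2 = -(p1 * Real.log p1) - p2 * Real.log p2 := by
    simp only [binEnt, Real.logb]
    have h12 : (1:ℝ) - p1 = p2 := by linarith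
    rw [h12]
    field_simp
  have hexp : mi2 a b 0 p2 * Real.log 2 =
      -(a * Real.log p1) + b * (Real.log b - Real.log p1 - Real.log s) +
      p2 * (-(Real.log s)) := by
    rw [key]
    rw [Real.log_div ha.ne' (by positivity), Real.log_mul hp1.ne' ha.ne',
        Real.log_div hb.ne' (by positivity), Real.log_mul hp1.ne' hs.ne',
        Real.log_div hp2.ne' (by positivity), Real.log_mul hp2.ne' hs.ne']
    ring
  have hdiff : (binEnt p1 - mi2 a b 0 p2) * Real.log 2 =
      -(b * Real.log (b / s)) - p2 * Real.log (p2 / s) := by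
    rw [sub_mul, hbent, hexp,
        Real.log_div hb.ne' hs.ne', Real.log_div hp2.ne' hs.ne']
    have hloga : Real.log p1 = Real.log p1 := rfl
    have h1 : a = p1 - b := by linarith
    rw [h1]; ring_nf
  have hlb : Real.log (b / s) < 0 :=
    Real.log_neg (div_pos hb hs) ((div_lt_one hs).2 hbslt)
  have hlp : Real.log (p2 / s) < 0 :=
    Real.log_neg (div_pos hp2 hs) ((div_lt_one hs).2 (by linarith))
  have hub : mi2 a b 0 p2 < binEnt p1 := by
    have h1 : 0 < (binEnt p1 - mi2 a b 0 p2) * Real.log 2 := by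
      rw [hdiff]; nlinarith
    nlinarith [h1, hlog2]
  refine ⟨⟨hposI, hub⟩, ?_⟩
  -- trivial case
  have h1 : p1 + p2 = 1 := hp
  simp only [mi2, add_zero, zero_add, zero_mul, mul_zero, hp]
  simp only [mul_one]
  rw [div_self hp1.ne', div_self hp2.ne', Real.logb_one]
  ring
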